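/- Let f : B → D be a Grothendieck opfibration and g : C → D any functor between small categories, and let V be a bicomplete category. For the strict fibre product square with projections C ×_D B → B and C ×_D B → C, the base change natural transformation (pr_C)_! (pr_B)^* ⟹ g^* f_! is a natural isomorphism. -/

import Mathlib

open CategoryTheory CategoryTheory.Limits
universe v w u

section BaseChange
variable {A B C D : Type u} [SmallCategory A] [SmallCategory B] [SmallCategory C] [SmallCategory D]
variable (V : Type v) [Category.{w} V] [HasColimitsOfSize.{u,u} V]

/-- The transformation `f^* ⋙ s^* ⟶ g^* ⋙ t^*` induced by `α : s ⋙ f ⟶ t ⋙ g`. -/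
def restrictionSquare (s : A ⥤ B) (t : A ⥤ C) (f : B ⥤ D) (g : C ⥤ D) (α : s ⋙ f ⟶ t ⋙ g) :
    ((Functor.whiskeringLeft B D V).obj f ⋙ (Functor.whiskeringLeft A B V).obj s : (D ⥤ V) ⥤ (A ⥤ V)) ⟶
      (Functor.whiskeringLeft C D V).obj g ⋙ (Functor.whiskeringLeft A C V).obj t where
  app H := Functor.whiskerRight α H
  naturality := by intros; ext; simp

/-- The base change natural transformation `t_! s^* ⟶ g^* f_!` of a lax square,
defined as the composite `t_! s^* ⟶ t_! s^* f^* f_! ⟶ t_! t^* g^* f_! ⟶ g^* f_!`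
using the unit of `f_! ⊣ f^*` and the counit of `t_! ⊣ t^*`. -/
noncomputable def baseChange (s : A ⥤ B) (t : A ⥤ C) (f : B ⥤ D) (g : C ⥤ D)
    (α : s ⋙ f ⟶ t ⋙ g) :
    ((Functor.whiskeringLeft A B V).obj s ⋙ t.lan : (B ⥤ V) ⥤ (C ⥤ V)) ⟶
      f.lan ⋙ (Functor.whiskeringLeft C D V).obj g :=
  Functor.whiskerRight (f.lanAdjunction V).unit ((Functor.whiskeringLeft A B V).obj s ⋙ t.lan) ≫
    Functor.whiskerRight (Functor.whiskerLeft f.lan (restrictionSquare V s t f g α)) t.lan ≫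
    Functor.whiskerLeft (f.lan ⋙ (Functor.whiskeringLeft C D V).obj g) (t.lanAdjunction V).counit

end BaseChange

section
variable {B C D : Type u} [SmallCategory B] [SmallCategory C] [SmallCategory D]

/-- An arrow `φ` of `X` is cocartesian for `p : X ⥤ Y` if any other arrow out of its source
whose image factors through `p(φ)` factors uniquely through `φ`, with prescribed image. -/
def IsCocartesianArrow {X Y : Type u} [SmallCategory X] [SmallCategory Y]
    (p : X ⥤ Y) {x y : X} (φ : x ⟶ y) : Prop :=
  ∀ ⦃z : X⦄ (φ' : x ⟶ z) (ψ : p.obj y ⟶ p.obj z), p.map φ' = p.map φ ≫ ψ →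
    ∃! χ : y ⟶ z, p.map χ = ψ ∧ φ ≫ χ = φ'

/-- A functor is a Grothendieck opfibration if every arrow of the base with a given lift of
its source admits a cocartesian lift. -/
def IsOpfibration {X Y : Type u} [SmallCategory X] [SmallCategory Y] (p : X ⥤ Y) : Prop :=
  ∀ ⦃x : X⦄ ⦃d : Y⦄ (ψ : p.obj x ⟶ d), ∃ (y : X) (φ : x ⟶ y) (e : p.obj y = d),
    p.map φ ≫ eqToHom e = ψ ∧ IsCocartesianArrow p φ

/-- The strict fibre product `C ×_D B` of `g : C ⥤ D` and `f : B ⥤ D`. -/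
structure CatPullback (g : C ⥤ D) (f : B ⥤ D) : Type u where
  left : C
  right : B
  eq : g.obj left = f.obj right

variable (g : C ⥤ D) (f : B ⥤ D)

instance : Category.{u} (CatPullback g f) where
  Hom x y := {φ : (x.left ⟶ y.left) × (x.right ⟶ y.right) //
    g.map φ.1 = eqToHom x.eq ≫ f.map φ.2 ≫ eqToHom y.eq.symm}
  id x := ⟨(𝟙 _, 𝟙 _), by simp⟩
  comp φ ψ := ⟨(φ.1.1 ≫ ψ.1.1, φ.1.2 ≫ ψ.1.2), by simp [φ.2, ψ.2]⟩
  id_comp φ := by apply Subtype.ext; simp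
  comp_id φ := by apply Subtype.ext; simp
  assoc φ ψ χ := by apply Subtype.ext; simp

/-- The projection `C ×_D B ⥤ C`. -/
def CatPullback.prC : CatPullback g f ⥤ C where
  obj x := x.left
  map φ := φ.1.1
  map_id _ := rfl
  map_comp _ _ := rfl

/-- The projection `C ×_D B ⥤ B`. -/
def CatPullback.prB : CatPullback g f ⥤ B where
  obj x := x.right
  map φ := φ.1.2
  map_id _ := rfl
  map_comp _ _ := rfl

/-- The (identity-like) natural transformation of the strict pullback square. -/
def CatPullback.square : CatPullback.prB g f ⋙ f ⟶ CatPullback.prC g f ⋙ g where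
  app x := eqToHom x.eq.symm
  naturality x y φ := by
    dsimp [CatPullback.prB, CatPullback.prC]
    rw [φ.2]
    simp

namespace CatPullback

variable {g f}

/-- The comparison functor from the costructured arrow category of `prC` at `c` to the
costructured arrow category of `f` at `g.obj c`. -/
@[simps]
def comparison (c : C) :
    CostructuredArrow (prC g f) c ⥤ CostructuredArrow f (g.obj c) where
  obj j := CostructuredArrow.mk (eqToHom j.left.eq.symm ≫ g.map j.hom)
  map {j j'} m := CostructuredArrow.homMk m.left.1.2 (by
    have h1 := m.left.2
    have h2 := CostructuredArrow.w m
    dsimp [prC] at h1 h2 ⊢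
    have h3 : f.map m.left.1.2 ≫ eqToHom j'.left.eq.symm =
        eqToHom j.left.eq.symm ≫ g.map m.left.1.1 := by
      rw [h1]; simp
    rw [← Category.assoc, h3, Category.assoc, ← g.map_comp, h2])
  map_id j := by apply CostructuredArrow.hom_ext; rfl
  map_comp m m' := by apply CostructuredArrow.hom_ext; rfl

lemma comparison_final (hf : IsOpfibration f) (c : C) : (comparison (g := g) (f := f) c).Final := by
  constructor
  intro k
  -- the canonical object, coming from a cocartesian lift of `k.hom`
  obtain ⟨y₀, Φ, E, hΦ, -⟩ := hf k.hom
  let j₀ : CostructuredArrow (prC g f) c :=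
    CostructuredArrow.mk (Y := (⟨c, y₀, E.symm⟩ : CatPullback g f)) (𝟙 c)
  let z₀ : StructuredArrow k (comparison c) :=
    StructuredArrow.mk (Y := j₀) (CostructuredArrow.homMk Φ (by
      dsimp [j₀, comparison]
      erw [CostructuredArrow.mk_hom_eq_self, g.map_id, Category.comp_id]
      exact hΦ))
  -- every object is linked to `z₀` by a zigzag of length two
  have key : ∀ z : StructuredArrow k (comparison c),
      ∃ w : StructuredArrow k (comparison c), Nonempty (w ⟶ z) ∧ Nonempty (w ⟶ z₀) := by
    intro z
    have hu := CostructuredArrow.w z.hom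
    dsimp [comparison] at hu
    obtain ⟨y₁, φ, e, hφ, hcoc⟩ := hf (f.map z.hom.left ≫ eqToHom z.right.left.eq.symm)
    let q : CatPullback g f := ⟨z.right.left.left, y₁, e.symm⟩
    let jq : CostructuredArrow (prC g f) c := CostructuredArrow.mk (Y := q) z.right.hom
    let w : StructuredArrow k (comparison c) :=
      StructuredArrow.mk (Y := jq) (CostructuredArrow.homMk φ (by
        dsimp [jq, q, comparison]
        rw [← Category.assoc, hφ, Category.assoc]
        exact hu))
    refine ⟨w, ?_, ?_⟩
    · -- morphism `w ⟶ z`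
      obtain ⟨χ, ⟨hχ1, hχ2⟩, -⟩ := hcoc z.hom.left (eqToHom e ≫ eqToHom z.right.left.eq) (by
        rw [← Category.assoc, hφ]; simp; exact (Category.comp_id _).symm.trans (congrArg (f.map z.hom.left ≫ ·) ((eqToHom_trans _ _).trans (eqToHom_refl _ _)).symm))
      refine ⟨StructuredArrow.homMk (CostructuredArrow.homMk
        (⟨(𝟙 z.right.left.left, χ), ?_⟩ : jq.left ⟶ z.right.left) ?_) ?_⟩
      · dsimp [jq, q]; erw [hχ1, g.map_id, eqToHom_trans, eqToHom_trans, eqToHom_trans, eqToHom_refl]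
      · exact Category.id_comp _
      · apply CostructuredArrow.hom_ext
        dsimp [w, comparison]
        exact hχ2
    · -- morphism `w ⟶ z₀`
      obtain ⟨χ', ⟨hχ'1, hχ'2⟩, -⟩ := hcoc Φ
        (eqToHom e ≫ g.map z.right.hom ≫ eqToHom E.symm) (by
          have h5 : f.map φ ≫ eqToHom e ≫ g.map z.right.hom ≫ eqToHom E.symm =
              (f.map z.hom.left ≫ eqToHom z.right.left.eq.symm ≫ g.map z.right.hom) ≫
                eqToHom E.symm := by
            rw [← Category.assoc, hφ]; simp
          erw [h5, hu, ← hΦ]; simp)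
      refine ⟨StructuredArrow.homMk (CostructuredArrow.homMk
        (⟨(z.right.hom, χ'), ?_⟩ : jq.left ⟶ j₀.left) ?_) ?_⟩
      · dsimp [jq, q, j₀]; erw [hχ'1]; simp
      · exact Category.comp_id _
      · apply CostructuredArrow.hom_ext
        dsimp [w, comparison]
        exact hχ'2
  haveI : Nonempty (StructuredArrow k (comparison c)) := ⟨z₀⟩
  have hz₀ : ∀ z : StructuredArrow k (comparison c), Zigzag z z₀ := by
    intro z
    obtain ⟨w, ⟨m1⟩, ⟨m2⟩⟩ := key z
    exact Relation.ReflTransGen.tail (Relation.ReflTransGen.single (Or.inr ⟨m1⟩)) (Or.inl ⟨m2⟩)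
  exact zigzag_isConnected fun z z' =>
    Relation.ReflTransGen.trans (hz₀ z) (zigzag_symmetric.symm _ _ (hz₀ z'))

end CatPullback

section Key

open CatPullback

variable (V : Type v) [Category.{w} V] [HasColimitsOfSize.{u,u} V]

lemma baseChange_key (H : B ⥤ V) (c : C) (j : CostructuredArrow (prC g f) c) :
    ((prC g f).lanUnit.app (prB g f ⋙ H)).app j.left ≫
      ((prC g f).lan.obj (prB g f ⋙ H)).map j.hom ≫
        ((baseChange V (prB g f) (prC g f) f g (square g f)).app H).app c =
    (f.lanUnit.app H).app j.left.right ≫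
      (f.lan.obj H).map (eqToHom j.left.eq.symm ≫ g.map j.hom) := by
  have n1 : ((prC g f).lan.obj (prB g f ⋙ H)).map j.hom ≫
      ((prC g f).lan.map (Functor.whiskerLeft (prB g f) (f.lanUnit.app H))).app c =
      ((prC g f).lan.map (Functor.whiskerLeft (prB g f) (f.lanUnit.app H))).app j.left.left ≫
      ((prC g f).lan.obj (prB g f ⋙ f ⋙ f.lan.obj H)).map j.hom :=
    NatTrans.naturality _ j.hom
  have u1 : ((prC g f).lanUnit.app (prB g f ⋙ H)).app j.left ≫
      ((prC g f).lan.map (Functor.whiskerLeft (prB g f) (f.lanUnit.app H))).app j.left.left =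
      (f.lanUnit.app H).app j.left.right ≫
      ((prC g f).lanUnit.app (prB g f ⋙ f ⋙ f.lan.obj H)).app j.left :=
    (congr_app ((prC g f).lanUnit.naturality (Functor.whiskerLeft (prB g f) (f.lanUnit.app H))) j.left).symm
  have n2 : ((prC g f).lan.obj (prB g f ⋙ f ⋙ f.lan.obj H)).map j.hom ≫
      ((prC g f).lan.map (Functor.whiskerRight (square g f) (f.lan.obj H))).app c =
      ((prC g f).lan.map (Functor.whiskerRight (square g f) (f.lan.obj H))).app j.left.left ≫
      ((prC g f).lan.obj (prC g f ⋙ g ⋙ f.lan.obj H)).map j.hom :=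
    NatTrans.naturality _ j.hom
  have u2 : ((prC g f).lanUnit.app (prB g f ⋙ f ⋙ f.lan.obj H)).app j.left ≫
      ((prC g f).lan.map (Functor.whiskerRight (square g f) (f.lan.obj H))).app j.left.left =
      (f.lan.obj H).map (eqToHom j.left.eq.symm) ≫
      ((prC g f).lanUnit.app (prC g f ⋙ g ⋙ f.lan.obj H)).app j.left :=
    (congr_app ((prC g f).lanUnit.naturality (Functor.whiskerRight (square g f) (f.lan.obj H)))
      j.left).symm
  have n3 : ((prC g f).lan.obj (prC g f ⋙ g ⋙ f.lan.obj H)).map j.hom ≫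
      (((prC g f).lanAdjunction V).counit.app (g ⋙ f.lan.obj H)).app c =
      (((prC g f).lanAdjunction V).counit.app (g ⋙ f.lan.obj H)).app j.left.left ≫
      (f.lan.obj H).map (g.map j.hom) :=
    NatTrans.naturality _ j.hom
  have tri : ((prC g f).lanUnit.app (prC g f ⋙ g ⋙ f.lan.obj H)).app j.left ≫
      (((prC g f).lanAdjunction V).counit.app (g ⋙ f.lan.obj H)).app j.left.left =
      𝟙 ((f.lan.obj H).obj (g.obj j.left.left)) :=
    (prC g f).lanUnit_app_app_lanAdjunction_counit_app_app (g ⋙ f.lan.obj H) j.left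
  simp only [baseChange, Functor.lanAdjunction_unit]
  show ((prC g f).lanUnit.app (prB g f ⋙ H)).app j.left ≫
      ((prC g f).lan.obj (prB g f ⋙ H)).map j.hom ≫
      ((prC g f).lan.map (Functor.whiskerLeft (prB g f) (f.lanUnit.app H))).app c ≫
      ((prC g f).lan.map (Functor.whiskerRight (square g f) (f.lan.obj H))).app c ≫
      (((prC g f).lanAdjunction V).counit.app (g ⋙ f.lan.obj H)).app c = _
  have R : ∀ {X Y Y' Z W : V} {a : X ⟶ Y} {b : Y ⟶ Z} {a' : X ⟶ Y'} {b' : Y' ⟶ Z},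
      a ≫ b = a' ≫ b' → ∀ h : Z ⟶ W, a ≫ b ≫ h = a' ≫ b' ≫ h := fun e h => by
    rw [← Category.assoc, e, Category.assoc]
  have R' : ∀ {X Y W : V} {a : X ⟶ Y} {b : Y ⟶ X},
      a ≫ b = 𝟙 X → ∀ h : X ⟶ W, a ≫ b ≫ h = h := fun e h => by
    rw [← Category.assoc, e, Category.id_comp]
  erw [R n1, R u1, R n2, R u2, n3, R' tri, Functor.map_comp]
  rfl

end Key

/-- **Base change along a strict fibre product square whose right leg is an opfibration
is an isomorphism:** `(pr_C)_! (pr_B)^* ⟶ g^* f_!` is a natural isomorphism. -/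
theorem baseChange_pullback_opfibration_isIso
    (hf : IsOpfibration f)
    (V : Type v) [Category.{w} V] [HasColimitsOfSize.{u,u} V] [HasLimitsOfSize.{u,u} V] :
    IsIso (baseChange V (CatPullback.prB g f) (CatPullback.prC g f) f g
      (CatPullback.square g f)) := by
  have : ∀ H : B ⥤ V, IsIso ((baseChange V (CatPullback.prB g f) (CatPullback.prC g f) f g (CatPullback.square g f)).app H) := by
    intro H
    have : ∀ c : C, IsIso (((baseChange V (CatPullback.prB g f) (CatPullback.prC g f) f g (CatPullback.square g f)).app H).app c) := by
      intro c
      haveI : (CatPullback.comparison (g := g) (f := f) c).Final := CatPullback.comparison_final hf c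
      let G := CostructuredArrow.proj f (g.obj c) ⋙ H
      let e₁ : ((((Functor.whiskeringLeft (CatPullback g f) B V).obj (CatPullback.prB g f)) ⋙
          (CatPullback.prC g f).lan).obj H).obj c ≅ colimit (CatPullback.comparison (g := g) (f := f) c ⋙ G) :=
        (CatPullback.prC g f).leftKanExtensionObjIsoColimit (CatPullback.prB g f ⋙ H) c
      let e₂ : ((f.lan ⋙ (Functor.whiskeringLeft C D V).obj g).obj H).obj c ≅ colimit G :=
        f.leftKanExtensionObjIsoColimit H (g.obj c)
      have heq : ((baseChange V (CatPullback.prB g f) (CatPullback.prC g f) f g (CatPullback.square g f)).app H).app c =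
          e₁.hom ≫ colimit.pre G (CatPullback.comparison (g := g) (f := f) c) ≫ e₂.inv := by
        rw [← Iso.inv_comp_eq]
        apply colimit.hom_ext
        intro j
        have h1 : colimit.ι (CatPullback.comparison (g := g) (f := f) c ⋙ G) j ≫ e₁.inv =
            ((CatPullback.prC g f).lanUnit.app (CatPullback.prB g f ⋙ H)).app j.left ≫
              ((CatPullback.prC g f).lan.obj (CatPullback.prB g f ⋙ H)).map j.hom :=
          (CatPullback.prC g f).ι_leftKanExtensionObjIsoColimit_inv (CatPullback.prB g f ⋙ H) c j
        have h2 : colimit.ι G ((CatPullback.comparison (g := g) (f := f) c).obj j) ≫ e₂.inv =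
            (f.lanUnit.app H).app j.left.right ≫
              (f.lan.obj H).map (eqToHom j.left.eq.symm ≫ g.map j.hom) :=
          f.ι_leftKanExtensionObjIsoColimit_inv H (g.obj c)
            ((CatPullback.comparison (g := g) (f := f) c).obj j)
        have h3 := colimit.ι_pre G (CatPullback.comparison (g := g) (f := f) c) j
        rw [← Category.assoc, h1, ← Category.assoc, h3, h2]; erw [Category.assoc]
        exact baseChange_key g f V H c j
      rw [heq]
      infer_instance
    exact NatIso.isIso_of_isIso_app _
  exact NatIso.isIso_of_isIso_app _

end
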